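/- Let N ≥ 2, let π₀ lie in the interior of the probability simplex in ℝ^N, let τ > 0 and q̄ ∈ ℝ^N. Define Φ(π) = ⟨π, q̄⟩ − τ·KL(π‖π₀) − ψ(π) on the interior of the simplex, where ψ(π) = max(0, max_{i∈[N]} (−τ·log(π_i/(π₀)_i))). Then there exists a unique π* in the interior of the simplex such that Φ(π*) ≥ Φ(π) for all π in the interior of the simplex. -/

import Mathlib

open Finset

/-- Kullback–Leibler divergence between two vectors in the interior of the simplex. -/
noncomputable def KL {N : ℕ} (π π₀ : Fin N → ℝ) : ℝ :=
  ∑ i, π i * Real.log (π i / π₀ i)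

/-- Minimal implementation cost `ψ(π) = max(0, max_i (−τ log(π_i/(π₀)_i)))`. -/
noncomputable def psi {N : ℕ} (τ : ℝ) (π₀ π : Fin N → ℝ) : ℝ :=
  max 0 (⨆ i, -τ * Real.log (π i / π₀ i))

/-- The aggregate-surplus potential `Φ(π) = ⟨π, q̄⟩ − τ·KL(π‖π₀) − ψ(π)`. -/
noncomputable def Phi {N : ℕ} (τ : ℝ) (π₀ qbar π : Fin N → ℝ) : ℝ :=
  (∑ i, π i * qbar i) - τ * KL π π₀ - psi τ π₀ π


section Aux
set_option linter.unusedSectionVars false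

variable {N : ℕ} [NeZero N]

lemma psi_nonneg (τ : ℝ) (π₀ π : Fin N → ℝ) : 0 ≤ psi τ π₀ π := le_max_left _ _

lemma le_psi (τ : ℝ) (π₀ π : Fin N → ℝ) (i : Fin N) :
    -τ * Real.log (π i / π₀ i) ≤ psi τ π₀ π :=
  le_trans (le_ciSup (f := fun i => -τ * Real.log (π i / π₀ i))
    (Set.Finite.bddAbove (Set.finite_range _)) i) (le_max_right _ _)

lemma psi_le {τ c : ℝ} {π₀ π : Fin N → ℝ} (h0 : 0 ≤ c)
    (h : ∀ i, -τ * Real.log (π i / π₀ i) ≤ c) : psi τ π₀ π ≤ c :=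
  max_le h0 (ciSup_le h)

lemma psi_self {τ : ℝ} {π₀ : Fin N → ℝ} (h₀ : ∀ i, 0 < π₀ i) : psi τ π₀ π₀ = 0 :=
  le_antisymm (psi_le le_rfl fun i => by
    rw [div_self (h₀ i).ne', Real.log_one]; simp) (psi_nonneg τ π₀ π₀)

lemma KL_self {π₀ : Fin N → ℝ} (h₀ : ∀ i, 0 < π₀ i) : KL π₀ π₀ = 0 := by
  apply Finset.sum_eq_zero; intro i _
  rw [div_self (h₀ i).ne', Real.log_one, mul_zero]

lemma KL_nonneg {π₀ π : Fin N → ℝ} (h₀ : ∀ i, 0 < π₀ i) (h : ∀ i, 0 < π i)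
    (hs₀ : ∑ i, π₀ i = 1) (hs : ∑ i, π i = 1) : 0 ≤ KL π π₀ := by
  have key : ∀ i, π i - π₀ i ≤ π i * Real.log (π i / π₀ i) := by
    intro i
    have hlog := Real.log_le_sub_one_of_pos (div_pos (h₀ i) (h i))
    have hinv : Real.log (π i / π₀ i) = -Real.log (π₀ i / π i) := by
      rw [← Real.log_inv, inv_div]
    have hne0 : π i ≠ 0 := (h i).ne'
    have hfield : π i * (π₀ i / π i - 1) = π₀ i - π i := by field_simp
    have := mul_le_mul_of_nonneg_left hlog (h i).le
    rw [hinv]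
    nlinarith
  calc (0:ℝ) = ∑ i, (π i - π₀ i) := by rw [Finset.sum_sub_distrib, hs, hs₀, sub_self]
    _ ≤ KL π π₀ := Finset.sum_le_sum fun i _ => key i

lemma contOn_sup' {ι α : Type*} [TopologicalSpace α] {s : Finset ι} (hs : s.Nonempty)
    {f : ι → α → ℝ} {t : Set α} (h : ∀ i ∈ s, ContinuousOn (f i) t) :
    ContinuousOn (fun x => s.sup' hs (fun i => f i x)) t := fun x hx =>
  Filter.Tendsto.finset_sup'_nhds_apply hs (fun i hi => h i hi x hx)

lemma mul_log_mid_le {x y : ℝ} (hx : 0 < x) (hy : 0 < y) :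
    ((x + y)/2) * Real.log ((x + y)/2) ≤ (x * Real.log x + y * Real.log y)/2 := by
  have h := Real.convexOn_mul_log.2 (Set.mem_Ici.2 hx.le) (Set.mem_Ici.2 hy.le)
    (by norm_num : (0:ℝ) ≤ 1/2) (by norm_num : (0:ℝ) ≤ 1/2) (by norm_num)
  simp only [smul_eq_mul] at h
  have e : (1/2:ℝ)*x + 1/2*y = (x+y)/2 := by ring
  rw [e] at h
  linarith

lemma mul_log_mid_lt {x y : ℝ} (hx : 0 < x) (hy : 0 < y) (hne : x ≠ y) :
    ((x + y)/2) * Real.log ((x + y)/2) < (x * Real.log x + y * Real.log y)/2 := by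
  have h := Real.strictConvexOn_mul_log.2 (Set.mem_Ici.2 hx.le) (Set.mem_Ici.2 hy.le)
    hne (by norm_num : (0:ℝ) < 1/2) (by norm_num : (0:ℝ) < 1/2) (by norm_num)
  simp only [smul_eq_mul] at h
  have e : (1/2:ℝ)*x + 1/2*y = (x+y)/2 := by ring
  rw [e] at h
  linarith

lemma log_mid_ge {x y : ℝ} (hx : 0 < x) (hy : 0 < y) :
    (Real.log x + Real.log y)/2 ≤ Real.log ((x+y)/2) := by
  have h := strictConcaveOn_log_Ioi.concaveOn.2 (Set.mem_Ioi.2 hx) (Set.mem_Ioi.2 hy)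
    (by norm_num : (0:ℝ) ≤ 1/2) (by norm_num : (0:ℝ) ≤ 1/2) (by norm_num)
  simp only [smul_eq_mul] at h
  have e : (1/2:ℝ)*x + 1/2*y = (x+y)/2 := by ring
  rw [e] at h
  linarith

lemma KL_eq {π₀ π : Fin N → ℝ} (h₀ : ∀ i, 0 < π₀ i) (h : ∀ i, 0 < π i) :
    KL π π₀ = (∑ i, π i * Real.log (π i)) - ∑ i, π i * Real.log (π₀ i) := by
  rw [KL, ← Finset.sum_sub_distrib]
  exact Finset.sum_congr rfl fun i _ => by
    rw [Real.log_div (h i).ne' (h₀ i).ne']; ring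

lemma phi_mid {τ : ℝ} (hτ : 0 < τ) {π₀ qbar π π' : Fin N → ℝ}
    (h₀ : ∀ i, 0 < π₀ i) (h : ∀ i, 0 < π i) (h' : ∀ i, 0 < π' i) (hne : π ≠ π') :
    (Phi τ π₀ qbar π + Phi τ π₀ qbar π')/2 < Phi τ π₀ qbar (fun i => (π i + π' i)/2) := by
  set m : Fin N → ℝ := fun i => (π i + π' i)/2 with hm
  have hmpos : ∀ i, 0 < m i := fun i => by have := h i; have := h' i; positivity
  have hlin : ∑ i, m i * qbar i = (∑ i, π i * qbar i + ∑ i, π' i * qbar i)/2 := by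
    rw [← Finset.sum_add_distrib, Finset.sum_div]
    exact Finset.sum_congr rfl fun i _ => by simp only [hm]; ring
  have hlog0 : ∑ i, m i * Real.log (π₀ i)
      = (∑ i, π i * Real.log (π₀ i) + ∑ i, π' i * Real.log (π₀ i))/2 := by
    rw [← Finset.sum_add_distrib, Finset.sum_div]
    exact Finset.sum_congr rfl fun i _ => by simp only [hm]; ring
  obtain ⟨j, hj⟩ := Function.ne_iff.mp hne
  have hS : ∑ i, m i * Real.log (m i)
      < (∑ i, π i * Real.log (π i) + ∑ i, π' i * Real.log (π' i))/2 := by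
    rw [← Finset.sum_add_distrib, Finset.sum_div]
    apply Finset.sum_lt_sum
    · intro i _
      simpa using mul_log_mid_le (h i) (h' i)
    · exact ⟨j, Finset.mem_univ j, by simpa using mul_log_mid_lt (h j) (h' j) hj⟩
  have hpsi : psi τ π₀ m ≤ (psi τ π₀ π + psi τ π₀ π')/2 := by
    apply psi_le (div_nonneg (add_nonneg (psi_nonneg _ _ _) (psi_nonneg _ _ _)) (by norm_num))
    intro i
    have l1 := log_mid_ge (div_pos (h i) (h₀ i)) (div_pos (h' i) (h₀ i))
    have e : (π i / π₀ i + π' i / π₀ i)/2 = m i / π₀ i := by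
      rw [← add_div]; simp only [hm]; ring
    rw [e] at l1
    have l2 := le_psi τ π₀ π i
    have l3 := le_psi τ π₀ π' i
    nlinarith [mul_le_mul_of_nonneg_left l1 hτ.le]
  have hSτ := mul_lt_mul_of_pos_left hS hτ
  simp only [Phi, KL_eq h₀ h, KL_eq h₀ h', KL_eq h₀ hmpos, hlin, hlog0]
  linarith

end Aux



/-- `Φ` admits a unique maximizer over the interior of the probability simplex
(the unique equilibrium policy of the common-agency alignment game). -/
theorem stmt_3 (N : ℕ) (hN : 2 ≤ N) (π₀ : Fin N → ℝ)
    (hπ₀pos : ∀ i, 0 < π₀ i) (hπ₀sum : ∑ i, π₀ i = 1)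
    (τ : ℝ) (hτ : 0 < τ) (qbar : Fin N → ℝ) :
    ∃! πstar : Fin N → ℝ,
      ((∀ i, 0 < πstar i) ∧ ∑ i, πstar i = 1) ∧
      ∀ π : Fin N → ℝ, (∀ i, 0 < π i) → ∑ i, π i = 1 →
        Phi τ π₀ qbar π ≤ Phi τ π₀ qbar πstar := by
  haveI : NeZero N := ⟨by omega⟩
  set Q : ℝ := univ.sup' univ_nonempty qbar with hQdef
  have hQ : ∀ i, qbar i ≤ Q := fun i => Finset.le_sup' qbar (mem_univ i)
  set m0 : ℝ := univ.inf' univ_nonempty π₀ with hm0def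
  have hm0 : 0 < m0 := (Finset.lt_inf'_iff _).2 fun i _ => hπ₀pos i
  have hm0le : ∀ i, m0 ≤ π₀ i := fun i => Finset.inf'_le π₀ (mem_univ i)
  -- generic linear bound
  have hlinQ : ∀ π : Fin N → ℝ, (∀ i, 0 < π i) → ∑ i, π i = 1 → ∑ i, π i * qbar i ≤ Q := by
    intro π hp hs
    calc ∑ i, π i * qbar i ≤ ∑ i, π i * Q :=
          Finset.sum_le_sum fun i _ => mul_le_mul_of_nonneg_left (hQ i) (hp i).le
      _ = Q := by rw [← Finset.sum_mul, hs, one_mul]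
  have hΦ₀ : Phi τ π₀ qbar π₀ = ∑ i, π₀ i * qbar i := by
    rw [Phi, KL_self hπ₀pos, psi_self hπ₀pos]; ring
  set Φ₀ : ℝ := Phi τ π₀ qbar π₀ with hΦ₀def
  have hΦ₀leQ : Φ₀ ≤ Q := hΦ₀ ▸ hlinQ π₀ hπ₀pos hπ₀sum
  have hphile : ∀ π : Fin N → ℝ, (∀ i, 0 < π i) → ∑ i, π i = 1 →
      Phi τ π₀ qbar π ≤ Q - psi τ π₀ π := by
    intro π hp hs
    have h1 := hlinQ π hp hs
    have h2 := KL_nonneg hπ₀pos hp hπ₀sum hs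
    have h3 : 0 ≤ τ * KL π π₀ := mul_nonneg hτ.le h2
    rw [Phi]; linarith
  set ε : ℝ := m0 * Real.exp (-(Q - Φ₀ + 1)/τ) with hεdef
  have hε0 : 0 < ε := mul_pos hm0 (Real.exp_pos _)
  have hεm0 : ε < m0 := by
    have : Real.exp (-(Q - Φ₀ + 1)/τ) < 1 := by
      rw [Real.exp_lt_one_iff]
      apply div_neg_of_neg_of_pos _ hτ
      linarith
    calc ε < m0 * 1 := by rw [hεdef]; exact mul_lt_mul_of_pos_left this hm0
      _ = m0 := mul_one m0
  set K : Set (Fin N → ℝ) := {π | (∀ i, ε ≤ π i) ∧ ∑ i, π i = 1} with hKdef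
  have hπ₀K : π₀ ∈ K := ⟨fun i => (hεm0.le.trans (hm0le i)), hπ₀sum⟩
  have hKclosed : IsClosed K := by
    have hKeq : K = (⋂ i, {π : Fin N → ℝ | ε ≤ π i}) ∩ {π | ∑ i, π i = 1} := by
      ext π; simp [hKdef, Set.mem_iInter]
    rw [hKeq]
    exact (isClosed_iInter fun i => isClosed_le continuous_const (continuous_apply i)).inter
      (isClosed_eq (continuous_finset_sum _ fun i _ => continuous_apply i) continuous_const)
  have hKcomp : IsCompact K := by
    apply IsCompact.of_isClosed_subset (isCompact_univ_pi fun _ => isCompact_Icc (a := ε) (b := 1))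
      hKclosed
    intro π hπ
    rw [Set.mem_univ_pi]
    intro i
    refine ⟨hπ.1 i, ?_⟩
    calc π i ≤ ∑ j, π j :=
          Finset.single_le_sum (fun j _ => le_trans hε0.le (hπ.1 j)) (mem_univ i)
      _ = 1 := hπ.2
  set P : Set (Fin N → ℝ) := {π | ∀ i, 0 < π i} with hPdef
  have hKP : K ⊆ P := fun π hπ i => lt_of_lt_of_le hε0 (hπ.1 i)
  have hlogi : ∀ i : Fin N, ContinuousOn (fun π : Fin N → ℝ => Real.log (π i / π₀ i)) P := by
    intro i
    exact ContinuousOn.log ((continuous_apply i).continuousOn.div_const _)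
      (fun π hπ => div_ne_zero (hπ i).ne' (hπ₀pos i).ne')
  have hcont : ContinuousOn (Phi τ π₀ qbar) P := by
    have hA : ContinuousOn (fun π : Fin N → ℝ => ∑ i, π i * qbar i) P :=
      (continuous_finset_sum _ fun i _ => (continuous_apply i).mul continuous_const).continuousOn
    have hKL : ContinuousOn (fun π : Fin N → ℝ => KL π π₀) P := by
      apply continuousOn_finset_sum
      intro i _
      exact (continuous_apply i).continuousOn.mul (hlogi i)
    have hps : ContinuousOn (fun π : Fin N → ℝ => psi τ π₀ π) P := by
      have hrw : (fun π : Fin N → ℝ => psi τ π₀ π)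
          = fun π => (0 : ℝ) ⊔ (univ.sup' univ_nonempty fun i => -τ * Real.log (π i / π₀ i)) := by
        funext π
        rw [psi, Finset.sup'_univ_eq_ciSup]
      rw [hrw]
      exact continuousOn_const.sup
        (contOn_sup' univ_nonempty fun i _ => continuousOn_const.mul (hlogi i))
    exact (hA.sub (continuousOn_const.mul hKL)).sub hps
  obtain ⟨πstar, hπstarK, hmax⟩ :=
    hKcomp.exists_isMaxOn ⟨π₀, hπ₀K⟩ (hcont.mono hKP)
  have hstarpos : ∀ i, 0 < πstar i := fun i => lt_of_lt_of_le hε0 (hπstarK.1 i)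
  have hstarsum : ∑ i, πstar i = 1 := hπstarK.2
  have hΦ₀star : Φ₀ ≤ Phi τ π₀ qbar πstar := hmax hπ₀K
  have hglob : ∀ π : Fin N → ℝ, (∀ i, 0 < π i) → ∑ i, π i = 1 →
      Phi τ π₀ qbar π ≤ Phi τ π₀ qbar πstar := by
    intro π hpos hsum
    by_cases hK : π ∈ K
    · exact hmax hK
    · have hj : ∃ j, π j < ε := by
        by_contra hc
        push_neg at hc
        exact hK ⟨hc, hsum⟩
      obtain ⟨j, hj⟩ := hj
      have h1 := hphile π hpos hsum
      have h2 : τ * Real.log (π₀ j / π j) ≤ psi τ π₀ π := by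
        have := le_psi τ π₀ π j
        have hinv : Real.log (π j / π₀ j) = -Real.log (π₀ j / π j) := by
          rw [← Real.log_inv, inv_div]
        rw [hinv] at this
        linarith
      have hratio : m0 / ε < π₀ j / π j := by
        calc m0 / ε ≤ π₀ j / ε := div_le_div_of_nonneg_right (hm0le j) hε0.le
          _ < π₀ j / π j := div_lt_div_of_pos_left (hπ₀pos j) (hpos j) hj
      have h3 : Real.log (m0 / ε) < Real.log (π₀ j / π j) :=
        Real.log_lt_log (div_pos hm0 hε0) hratio
      have h4 : τ * Real.log (m0 / ε) = Q - Φ₀ + 1 := by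
        rw [hεdef, Real.log_div hm0.ne' (mul_pos hm0 (Real.exp_pos _)).ne',
          Real.log_mul hm0.ne' (Real.exp_ne_zero _), Real.log_exp]
        field_simp
        ring
      have h5 := mul_lt_mul_of_pos_left h3 hτ
      linarith
  refine ⟨πstar, ⟨⟨hstarpos, hstarsum⟩, hglob⟩, ?_⟩
  rintro y ⟨⟨hypos, hysum⟩, hymax⟩
  by_contra hne
  have hyle : Phi τ π₀ qbar y ≤ Phi τ π₀ qbar πstar := hglob y hypos hysum
  have hley : Phi τ π₀ qbar πstar ≤ Phi τ π₀ qbar y := hymax πstar hstarpos hstarsum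
  have hmsum : ∑ i, (y i + πstar i)/2 = 1 := by
    rw [← Finset.sum_div, Finset.sum_add_distrib, hysum, hstarsum]
    norm_num
  have hmpos : ∀ i, 0 < (y i + πstar i)/2 := fun i => by
    have := hypos i; have := hstarpos i; positivity
  have hmid : (Phi τ π₀ qbar y + Phi τ π₀ qbar πstar)/2
      < Phi τ π₀ qbar (fun i => (y i + πstar i)/2) :=
    phi_mid hτ hπ₀pos hypos hstarpos hne
  have hmle : Phi τ π₀ qbar (fun i => (y i + πstar i)/2) ≤ Phi τ π₀ qbar πstar :=
    hglob (fun i => (y i + πstar i)/2) hmpos hmsum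
  linarith
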